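/- Minimax Lemma. Let {F_i ; i ∈ I} be a family of upper semicontinuous functions from a Polish space E to [−∞, +∞), and let {P_n ; n ∈ ℕ} be a sequence of Borel probability measures on E. Assume that for every open set A ⊆ E, limsup_{n→∞} (1/n) log P_n(A) ≤ inf_{i ∈ I} sup_{x ∈ A} F_i(x). Then for every compact set K ⊆ E, limsup_{n→∞} (1/n) log P_n(K) ≤ sup_{x ∈ K} inf_{i ∈ I} F_i(x). -/

import Mathlib

open MeasureTheory Filter
open scoped ENNReal

noncomputable section

/-- `log` of a nonnegative extended real, with the convention `log 0 = −∞`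
(used for `log P_n(A)` when `P_n(A) = 0`). -/
def llog (r : ℝ≥0∞) : EReal :=
  if r = 0 then ⊥ else ((Real.log r.toReal : ℝ) : EReal)

private lemma llog_zero : llog 0 = ⊥ := if_pos rfl

private lemma llog_le_llog {a b : ℝ≥0∞} (h : a ≤ b) (hb : b ≠ ∞) : llog a ≤ llog b := by
  unfold llog
  rcases eq_or_ne a 0 with rfl | ha
  · simp
  · have hb0 : b ≠ 0 := fun hh => ha (le_antisymm (hh ▸ h) zero_le)
    have hat : a ≠ ∞ := ne_top_of_le_ne_top hb h
    rw [if_neg ha, if_neg hb0, EReal.coe_le_coe_iff]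
    exact Real.log_le_log (ENNReal.toReal_pos ha hat)
      ((ENNReal.toReal_le_toReal hat hb).2 h)

private lemma limsup_sup'_le {ι : Type*} (t : Finset ι) (ht : t.Nonempty) (u : ι → ℕ → EReal) :
    limsup (fun n => t.sup' ht (fun i => u i n)) atTop
      ≤ t.sup' ht (fun i => limsup (u i) atTop) := by
  induction ht using Finset.Nonempty.cons_induction with
  | singleton a => simp
  | cons a s ha hs ih =>
      simp only [Finset.sup'_cons hs]
      have : limsup (fun n => u a n ⊔ s.sup' hs (fun i => u i n)) atTop
          = limsup (u a) atTop ⊔ limsup (fun n => s.sup' hs (fun i => u i n)) atTop := by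
        simpa using
          limsup_max (f := atTop) (u := u a) (v := fun n => s.sup' hs (fun i => u i n))
      rw [this]
      exact sup_le_sup le_rfl ih

set_option maxHeartbeats 1000000 in
/-- **Minimax Lemma.** Let `{F_i}` be upper semicontinuous functions
from a Polish space `E` to `[−∞, +∞)` and `{P_n}` Borel probability measures on `E`.
If `limsup (1/n) log P_n(A) ≤ inf_i sup_{x ∈ A} F_i(x)` for every open `A`, then
`limsup (1/n) log P_n(K) ≤ sup_{x ∈ K} inf_i F_i(x)` for every compact `K`. -/
theorem minimax_lemma {E : Type*} [TopologicalSpace E] [PolishSpace E]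
    [MeasurableSpace E] [BorelSpace E]
    {ι : Type*} (F : ι → E → EReal)
    (husc : ∀ i, UpperSemicontinuous (F i)) (hne : ∀ i x, F i x ≠ ⊤)
    (P : ℕ → Measure E) (hP : ∀ n, IsProbabilityMeasure (P n))
    (hopen : ∀ A : Set E, IsOpen A →
      limsup (fun n : ℕ => (((n : ℝ)⁻¹ : ℝ) : EReal) * llog (P n A)) atTop
        ≤ ⨅ i, ⨆ x ∈ A, F i x) :
    ∀ K : Set E, IsCompact K →
      limsup (fun n : ℕ => (((n : ℝ)⁻¹ : ℝ) : EReal) * llog (P n K)) atTop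
        ≤ ⨆ x ∈ K, ⨅ i, F i x := by
  intro K hK
  rcases K.eq_empty_or_nonempty with rfl | hKne
  · refine le_trans (limsup_le_of_le ?_ ?_) bot_le
    · isBoundedDefault
    · filter_upwards [eventually_ge_atTop 1] with n hn
      have hn0 : (0:ℝ) < (n:ℝ)⁻¹ := inv_pos.2 (by exact_mod_cast hn)
      have : P n (∅ : Set E) = 0 := measure_empty
      rw [this, llog_zero, EReal.coe_mul_bot_of_pos (by exact_mod_cast hn0)]
  · rw [← EReal.le_of_forall_lt_iff_le]
    intro b hb
    set U : ι → Set E := fun i => F i ⁻¹' Set.Iio (b : EReal) with hUdef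
    have hUopen : ∀ i, IsOpen (U i) := fun i => (husc i).isOpen_preimage _
    have hcover : K ⊆ ⋃ i, U i := by
      intro x hx
      have h1 : (⨅ i, F i x) < b :=
        lt_of_le_of_lt (le_iSup₂ (f := fun x _ => ⨅ i, F i x) x hx) hb
      obtain ⟨i, hi⟩ := iInf_lt_iff.1 h1
      exact Set.mem_iUnion.2 ⟨i, hi⟩
    obtain ⟨t, htc⟩ := hK.elim_finite_subcover U hUopen hcover
    have ht : t.Nonempty := by
      obtain ⟨x, hx⟩ := hKne
      obtain ⟨i, hi, -⟩ := Set.mem_iUnion₂.1 (htc hx)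
      exact ⟨i, hi⟩
    set c : ℝ := Real.log t.card with hc
    set A : ℕ → EReal := fun n => ((((n : ℝ)⁻¹ * c : ℝ)) : EReal) with hAdef
    set B : ℕ → EReal :=
      fun n => t.sup' ht (fun i => (((n : ℝ)⁻¹ : ℝ) : EReal) * llog (P n (U i))) with hBdef
    have key : ∀ᶠ n : ℕ in atTop,
        (((n : ℝ)⁻¹ : ℝ) : EReal) * llog (P n K) ≤ (A + B) n := by
      filter_upwards [eventually_ge_atTop 1] with n hn
      rw [Pi.add_apply, hAdef, hBdef]
      have hninv : (0:ℝ) < (n:ℝ)⁻¹ := inv_pos.2 (by exact_mod_cast hn)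
      obtain ⟨i₀, hi₀, hS⟩ := Finset.exists_mem_eq_sup t ht (fun i => P n (U i))
      have hPK : P n K ≤ (t.card : ℝ≥0∞) * P n (U i₀) := by
        calc P n K ≤ P n (⋃ i ∈ t, U i) := measure_mono htc
          _ ≤ ∑ i ∈ t, P n (U i) := measure_biUnion_finset_le _ _
          _ ≤ t.card • P n (U i₀) :=
              Finset.sum_le_card_nsmul t _ _ (fun i hi => hS ▸ Finset.le_sup (f := fun i => P n (U i)) hi)
          _ = (t.card : ℝ≥0∞) * P n (U i₀) := nsmul_eq_mul _ _
      set S := P n (U i₀) with hSdef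
      rcases eq_or_ne S 0 with hS0 | hS0
      · have hPK0 : P n K = 0 := le_antisymm (by simpa [hS0] using hPK) zero_le
        rw [hPK0, llog_zero, EReal.coe_mul_bot_of_pos (by exact_mod_cast hninv)]
        exact bot_le
      · have hS1 : S ≤ 1 := prob_le_one
        have hSt : S ≠ ∞ := (hS1.trans_lt ENNReal.one_lt_top).ne
        have hcard0 : (t.card : ℝ≥0∞) ≠ 0 := by
          simpa using ht.card_pos.ne'
        have hcs : (t.card : ℝ≥0∞) * S ≠ ∞ :=
          ENNReal.mul_ne_top (by simp) hSt
        have h1 : llog (P n K) ≤ llog ((t.card : ℝ≥0∞) * S) := llog_le_llog hPK hcs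
        have h2 : llog ((t.card : ℝ≥0∞) * S) = ((c + Real.log S.toReal : ℝ) : EReal) := by
          rw [llog, if_neg (mul_ne_zero hcard0 hS0)]
          congr 1
          rw [ENNReal.toReal_mul, Real.log_mul
            (by simpa using ht.card_pos.ne')
            (ENNReal.toReal_ne_zero.2 ⟨hS0, hSt⟩)]
          simp [hc]
        have h3 : llog S = ((Real.log S.toReal : ℝ) : EReal) := by rw [llog, if_neg hS0]
        calc (((n : ℝ)⁻¹ : ℝ) : EReal) * llog (P n K)
            ≤ (((n : ℝ)⁻¹ : ℝ) : EReal) * llog ((t.card : ℝ≥0∞) * S) :=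
              mul_le_mul_of_nonneg_left h1 (by exact_mod_cast hninv.le)
          _ = ((((n : ℝ)⁻¹ * c : ℝ)) : EReal)
                + (((n : ℝ)⁻¹ : ℝ) : EReal) * llog S := by
              rw [h2, h3, ← EReal.coe_mul, ← EReal.coe_mul, ← EReal.coe_add, mul_add]
          _ ≤ _ := by
              refine add_le_add le_rfl ?_
              exact Finset.le_sup'
                (fun i => (((n : ℝ)⁻¹ : ℝ) : EReal) * llog (P n (U i))) hi₀
    have hA : Tendsto A atTop (nhds (0 : EReal)) := by
      rw [hAdef]
      have h0 : Tendsto (fun n : ℕ => (n : ℝ)⁻¹ * c) atTop (nhds 0) := by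
        simpa using (tendsto_inv_atTop_zero.comp tendsto_natCast_atTop_atTop).mul_const c
      have := (continuous_coe_real_ereal.tendsto (0:ℝ)).comp h0
      exact this
    have hAeq : limsup A atTop = 0 := hA.limsup_eq
    have hBle : limsup B atTop ≤ (b : EReal) := by
      rw [hBdef]
      refine le_trans (limsup_sup'_le t ht _) ?_
      refine Finset.sup'_le _ _ fun i hi => ?_
      refine le_trans (hopen (U i) (hUopen i)) ?_
      refine le_trans (iInf_le _ i) ?_
      exact iSup₂_le fun x hx => le_of_lt hx
    calc limsup (fun n : ℕ => (((n : ℝ)⁻¹ : ℝ) : EReal) * llog (P n K)) atTop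
        ≤ limsup (A + B) atTop := limsup_le_limsup key
      _ ≤ limsup A atTop + limsup B atTop :=
          EReal.limsup_add_le (by rw [hAeq]; exact Or.inl (by simp))
            (by rw [hAeq]; exact Or.inl (by simp))
      _ ≤ 0 + (b : EReal) := add_le_add (le_of_eq hAeq) hBle
      _ = (b : EReal) := zero_add _

end
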